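/- The fourth central moment μ_{η,4}(x) := R_{η}^{(α,β)}((t−x)⁴;x) satisfies η²·μ_{η,4}(x) → 3x²(9β²+6β+1)/β² = 3x²(3β+1)²/β² as η → ∞, for every fixed x ≥ 0. -/

import Mathlib

open Real MeasureTheory Filter Set

/-- Generalized Laguerre polynomial `L_κ^{(α)}(x)`. -/
noncomputable def lag (κ : ℕ) (α x : ℝ) : ℝ :=
  ∑ ι ∈ Finset.range (κ + 1),
    (-1 : ℝ) ^ ι / (Nat.factorial ι) *
      ((∏ s ∈ Finset.range (κ - ι), (α + ι + 1 + s)) / (Nat.factorial (κ - ι))) * x ^ ι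
/-- Gamma-type kernel `I_{κ,η}^β(z)`. -/
noncomputable def ker (η β : ℝ) (κ : ℕ) (z : ℝ) : ℝ :=
  η * β * Real.exp (-(η * β * z)) * (η * β * z) ^ ((κ : ℝ) * β - 1) / Real.Gamma ((κ : ℝ) * β)
/-- The operators `R_η^{(α,β)}(Φ; x)`, with the `κ = 0` term interpreted as `Φ(0)·(coefficient)`. -/
noncomputable def Rop (η β α : ℝ) (Φ : ℝ → ℝ) (x : ℝ) : ℝ :=
  Real.exp (-(η * x) / 2) * (2 : ℝ) ^ (-α - 1) *
    ∑' κ : ℕ, (2 : ℝ) ^ (-(κ : ℝ)) * lag κ α (-(η * x) / 2) *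
      (if κ = 0 then Φ 0 else ∫ z in Set.Ioi (0 : ℝ), ker η β κ z * Φ z)

namespace Stmt17

/-- rising factorial -/
noncomputable def ris (a : ℝ) (m : ℕ) : ℝ := ∏ s ∈ Finset.range m, (a + s)

/-- falling factorial of a natural, as a real -/
noncomputable def dfl (n k : ℕ) : ℝ := ∏ i ∈ Finset.range k, ((n : ℝ) - i)

lemma ris_nonneg {a : ℝ} (ha : 0 ≤ a) (m : ℕ) : 0 ≤ ris a m :=
  Finset.prod_nonneg fun s _ => by positivity

lemma ris_add (a : ℝ) (k m : ℕ) : ris a (k + m) = ris a k * ris (a + k) m := by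
  unfold ris
  rw [Finset.prod_range_add]
  congr 1
  exact Finset.prod_congr rfl fun i _ => by push_cast; ring

lemma dfl_zero {n k : ℕ} (h : n < k) : dfl n k = 0 :=
  Finset.prod_eq_zero (Finset.mem_range.mpr h) (by simp)

lemma dfl_nonneg (n k : ℕ) : 0 ≤ dfl n k := by
  rcases lt_or_ge n k with h | h
  · rw [dfl_zero h]
  · refine Finset.prod_nonneg fun i hi => ?_
    have : i < k := Finset.mem_range.mp hi
    have : (i : ℝ) ≤ n := by exact_mod_cast le_of_lt (lt_of_lt_of_le this h)
    linarith

lemma dfl_fact (n k : ℕ) : dfl (n + k) k * n.factorial = ((n + k).factorial : ℝ) := by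
  induction k with
  | zero => simp [dfl]
  | succ k ih =>
      have h1 : dfl (n + (k + 1)) (k + 1) = dfl (n + k) k * ((n : ℝ) + k + 1) := by
        unfold dfl
        rw [Finset.prod_range_succ']
        push_cast
        congr 1
        · exact Finset.prod_congr rfl fun i _ => by push_cast; ring
        · ring
      have h2 : ((n + (k + 1)).factorial : ℝ) = ((n : ℝ) + k + 1) * ((n + k).factorial : ℝ) := by
        rw [show n + (k + 1) = (n + k) + 1 from rfl, Nat.factorial_succ]
        push_cast; ring
      rw [h1, h2, ← ih]; ring

lemma Gamma_shift {a : ℝ} (ha : 0 < a) (m : ℕ) :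
    Real.Gamma (a + m) = ris a m * Real.Gamma a := by
  induction m with
  | zero => simp [ris]
  | succ m ih =>
      have h : a + ((m + 1 : ℕ) : ℝ) = (a + m) + 1 := by push_cast; ring
      have hpos : (0 : ℝ) < a + m := by positivity
      rw [h, Real.Gamma_add_one hpos.ne', ih]
      unfold ris
      rw [Finset.prod_range_succ]
      ring

lemma integrableOn_exp_rpow {t c : ℝ} (ht : 0 < t) (hc : 0 < c) :
    IntegrableOn (fun z : ℝ => Real.exp (-(c * z)) * z ^ (t - 1)) (Ioi (0 : ℝ)) := by
  have h := integrableOn_rpow_mul_exp_neg_mul_rpow (p := 1) (s := t - 1) (b := c)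
    (by linarith) one_pos hc
  refine h.congr_fun (fun z hz => ?_) measurableSet_Ioi
  beta_reduce
  rw [Real.rpow_one, neg_mul, mul_comm]

lemma integral_exp_rpow {t c : ℝ} (ht : 0 < t) (hc : 0 < c) :
    ∫ z in Ioi (0 : ℝ), Real.exp (-(c * z)) * z ^ (t - 1) = Real.Gamma t / c ^ t := by
  calc ∫ z in Ioi (0 : ℝ), Real.exp (-(c * z)) * z ^ (t - 1)
      = ∫ z in Ioi (0 : ℝ), z ^ (t - 1) * Real.exp (-(c * z)) := by
        refine setIntegral_congr_fun measurableSet_Ioi fun z _ => ?_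
        ring
    _ = (1 / c) ^ t * Real.Gamma t := integral_rpow_mul_exp_neg_mul_Ioi ht hc
    _ = Real.Gamma t / c ^ t := by
        rw [Real.div_rpow zero_le_one hc.le, Real.one_rpow]
        ring

lemma hasSum_exp_base (y : ℝ) : HasSum (fun n : ℕ => y ^ n / n.factorial) (Real.exp y) := by
  simpa [Real.exp_eq_exp_ℝ] using NormedSpace.expSeries_div_hasSum_exp (𝔸 := ℝ) y

lemma hasSum_exp_dfl (y : ℝ) (k : ℕ) :
    HasSum (fun n : ℕ => y ^ n / n.factorial * dfl n k) (y ^ k * Real.exp y) := by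
  have key : HasSum (fun n : ℕ => y ^ (n + k) / (n + k).factorial * dfl (n + k) k)
      (y ^ k * Real.exp y) := by
    have h2 : (fun n : ℕ => y ^ (n + k) / (n + k).factorial * dfl (n + k) k)
        = fun n : ℕ => y ^ k * (y ^ n / n.factorial) := by
      funext n
      have hf := dfl_fact n k
      have h0 : ((n + k).factorial : ℝ) ≠ 0 := Nat.cast_ne_zero.mpr (Nat.factorial_ne_zero _)
      have h1 : ((n).factorial : ℝ) ≠ 0 := Nat.cast_ne_zero.mpr (Nat.factorial_ne_zero _)
      field_simp
      rw [pow_add, ← hf]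
      ring
    rw [h2]
    exact (hasSum_exp_base y).mul_left _
  have hz : ∑ i ∈ Finset.range k, y ^ i / i.factorial * dfl i k = 0 :=
    Finset.sum_eq_zero fun i hi => by rw [dfl_zero (Finset.mem_range.mp hi), mul_zero]
  exact (hasSum_nat_add_iff' k).mp (by rw [hz, sub_zero]; exact key)

lemma hasSum_binom {a : ℝ} (ha : 0 < a) :
    HasSum (fun m : ℕ => ris a m / m.factorial * (1 / 2 : ℝ) ^ m) ((2 : ℝ) ^ a) := by
  set φ : ℕ → ℝ → ℝ :=
    fun m z => Real.exp (-z) * z ^ (a - 1) * ((z / 2) ^ m / m.factorial) with hφ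
  set c : ℕ → ℝ := fun m => Real.Gamma (a + m) * (1 / 2 : ℝ) ^ m / m.factorial with hc
  have hnn : ∀ m, 0 ≤ c m := fun m => by
    have : (0:ℝ) < a + m := by positivity
    have := Real.Gamma_pos_of_pos this
    positivity
  -- integrability of each φ m
  have hφint : ∀ m : ℕ, IntegrableOn (φ m) (Ioi (0 : ℝ)) := by
    intro m
    have h : IntegrableOn
        (fun z : ℝ => ((1 / 2 : ℝ) ^ m / m.factorial) * (Real.exp (-(1 * z)) * z ^ (a + (m:ℝ) - 1)))
        (Ioi (0 : ℝ)) :=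
      (integrableOn_exp_rpow (t := a + m) (c := (1 : ℝ)) (by positivity) one_pos).const_mul
        ((1 / 2 : ℝ) ^ m / m.factorial)
    refine h.congr_fun (fun z hz => ?_) measurableSet_Ioi
    have hz' : (0 : ℝ) < z := hz
    have e1 : z ^ (a + (m : ℝ) - 1) = z ^ (a - 1) * z ^ m := by
      rw [← Real.rpow_natCast z m, ← Real.rpow_add hz']
      ring_nf
    beta_reduce
    rw [one_mul, e1, hφ]
    simp only [div_pow]
    ring_nf
  -- value of each real integral
  have hφval : ∀ m : ℕ, ∫ z in Ioi (0 : ℝ), φ m z = c m := by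
    intro m
    have h1 : ∀ z ∈ Ioi (0 : ℝ),
        φ m z = ((1 / 2 : ℝ) ^ m / m.factorial) * (Real.exp (-(1 * z)) * z ^ (a + m - 1)) := by
      intro z hz
      have hz' : (0 : ℝ) < z := hz
      have e1 : z ^ (a + (m : ℝ) - 1) = z ^ (a - 1) * z ^ m := by
        rw [← Real.rpow_natCast z m, ← Real.rpow_add hz']
        ring_nf
      rw [one_mul, e1, hφ]
      simp only [div_pow]
      ring
    rw [setIntegral_congr_fun measurableSet_Ioi h1, integral_const_mul,
      integral_exp_rpow (by positivity) one_pos, hc]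
    simp [Real.one_rpow]
    ring
  -- the full integral
  have hfullint : IntegrableOn (fun z : ℝ => Real.exp (-((1 / 2 : ℝ) * z)) * z ^ (a - 1))
      (Ioi (0 : ℝ)) := integrableOn_exp_rpow ha (by norm_num)
  have hfull : ∫ z in Ioi (0 : ℝ), Real.exp (-((1 / 2 : ℝ) * z)) * z ^ (a - 1)
      = Real.Gamma a * 2 ^ a := by
    rw [integral_exp_rpow ha (by norm_num : (0:ℝ) < 1/2)]
    rw [Real.div_rpow zero_le_one (by norm_num : (0:ℝ) ≤ 2), Real.one_rpow]
    rw [div_div_eq_mul_div, div_one]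
  -- measurability
  have hmeas : ∀ m : ℕ, AEMeasurable (fun z => ENNReal.ofReal (φ m z))
      (volume.restrict (Ioi (0 : ℝ))) := by
    intro m
    apply Measurable.aemeasurable
    apply ENNReal.measurable_ofReal.comp
    rw [hφ]
    fun_prop
  -- Tonelli
  have key : ∑' m : ℕ, ENNReal.ofReal (c m) = ENNReal.ofReal (Real.Gamma a * 2 ^ a) := by
    have h1 : ∀ m : ℕ, ENNReal.ofReal (c m)
        = ∫⁻ z in Ioi (0 : ℝ), ENNReal.ofReal (φ m z) := by
      intro m
      rw [← hφval m]
      refine ofReal_integral_eq_lintegral_ofReal (hφint m) ?_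
      refine (ae_restrict_iff' measurableSet_Ioi).mpr (ae_of_all _ fun z hz => ?_)
      have hz' : (0 : ℝ) < z := hz
      rw [hφ]
      positivity
    calc ∑' m : ℕ, ENNReal.ofReal (c m)
        = ∑' m : ℕ, ∫⁻ z in Ioi (0 : ℝ), ENNReal.ofReal (φ m z) := by
          exact tsum_congr h1
      _ = ∫⁻ z in Ioi (0 : ℝ), ∑' m : ℕ, ENNReal.ofReal (φ m z) := (lintegral_tsum hmeas).symm
      _ = ∫⁻ z in Ioi (0 : ℝ),
            ENNReal.ofReal (Real.exp (-((1 / 2 : ℝ) * z)) * z ^ (a - 1)) := by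
          refine setLIntegral_congr_fun measurableSet_Ioi (fun z hz => ?_)
          have hz' : (0 : ℝ) < z := hz
          have hs : HasSum (fun m : ℕ => φ m z)
              (Real.exp (-((1 / 2 : ℝ) * z)) * z ^ (a - 1)) := by
            have h := (hasSum_exp_base (z / 2)).mul_left (Real.exp (-z) * z ^ (a - 1))
            have e2 : Real.exp (-z) * z ^ (a - 1) * Real.exp (z / 2)
                = Real.exp (-((1 / 2 : ℝ) * z)) * z ^ (a - 1) := by
              rw [mul_comm (Real.exp (-z)) (z ^ (a - 1)), mul_assoc, ← Real.exp_add]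
              ring_nf
            rw [← e2]
            refine h.congr_fun fun m => ?_
            rw [hφ]
          rw [← hs.tsum_eq, ENNReal.ofReal_tsum_of_nonneg (fun m => by rw [hφ]; positivity)
            hs.summable]
      _ = ENNReal.ofReal (Real.Gamma a * 2 ^ a) := by
          rw [← hfull]
          refine (ofReal_integral_eq_lintegral_ofReal hfullint ?_).symm
          refine (ae_restrict_iff' measurableSet_Ioi).mpr (ae_of_all _ fun z hz => ?_)
          have hz' : (0 : ℝ) < z := hz
          positivity
  -- summability and value
  have hGpos := Real.Gamma_pos_of_pos ha
  have hsummable : Summable c := by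
    have h := ENNReal.summable_toReal (by rw [key]; exact ENNReal.ofReal_ne_top)
    exact h.congr fun m => ENNReal.toReal_ofReal (hnn m)
  have htsum : ∑' m, c m = Real.Gamma a * 2 ^ a := by
    have h2 := (ENNReal.ofReal_tsum_of_nonneg hnn hsummable).trans key
    exact (ENNReal.ofReal_eq_ofReal_iff (tsum_nonneg hnn) (by positivity)).mp h2
  have hfin : HasSum c (Real.Gamma a * 2 ^ a) := htsum ▸ hsummable.hasSum
  have hdiv := hfin.div_const (Real.Gamma a)
  have hval : Real.Gamma a * 2 ^ a / Real.Gamma a = (2 : ℝ) ^ a := by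
    field_simp
  rw [hval] at hdiv
  refine hdiv.congr_fun fun m => ?_
  rw [hc]
  simp only
  rw [Gamma_shift ha m]
  field_simp
lemma hasSum_binom_dfl {a : ℝ} (ha : 0 < a) (k : ℕ) :
    HasSum (fun m : ℕ => ris a m / m.factorial * (1 / 2 : ℝ) ^ m * dfl m k)
      (ris a k * (2 : ℝ) ^ a) := by
  have key : HasSum (fun n : ℕ => ris a (n + k) / (n + k).factorial * (1 / 2 : ℝ) ^ (n + k)
      * dfl (n + k) k) (ris a k * (2 : ℝ) ^ a) := by
    have h2 : (fun n : ℕ => ris a (n + k) / (n + k).factorial * (1 / 2 : ℝ) ^ (n + k)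
        * dfl (n + k) k)
        = fun n : ℕ => (ris a k * (1 / 2 : ℝ) ^ k) *
            (ris (a + k) n / n.factorial * (1 / 2 : ℝ) ^ n) := by
      funext n
      have hf := dfl_fact n k
      have h0 : ((n + k).factorial : ℝ) ≠ 0 := Nat.cast_ne_zero.mpr (Nat.factorial_ne_zero _)
      have h1 : ((n).factorial : ℝ) ≠ 0 := Nat.cast_ne_zero.mpr (Nat.factorial_ne_zero _)
      have hr : ris a (n + k) = ris a k * ris (a + k) n := by
        rw [add_comm n k]; exact ris_add a k n
      rw [hr, pow_add]
      field_simp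
      rw [← hf]
      ring
    rw [h2]
    have hb := (hasSum_binom (a := a + k) (by positivity)).mul_left (ris a k * (1 / 2 : ℝ) ^ k)
    have hv : (ris a k * (1 / 2 : ℝ) ^ k) * (2 : ℝ) ^ (a + (k : ℝ))
        = ris a k * (2 : ℝ) ^ a := by
      rw [Real.rpow_add two_pos, Real.rpow_natCast]
      rw [div_pow, one_pow]
      field_simp
    rwa [hv] at hb
  have hz : ∑ i ∈ Finset.range k, ris a i / i.factorial * (1 / 2 : ℝ) ^ i * dfl i k = 0 :=
    Finset.sum_eq_zero fun i hi => by rw [dfl_zero (Finset.mem_range.mp hi), mul_zero]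
  exact (hasSum_nat_add_iff' k).mp (by rw [hz, sub_zero]; exact key)

/-- The core double-sum lemma. -/
lemma core {α y : ℝ} (hα : -1 < α) (hy : 0 ≤ y) (j : ℕ) (σ : ℝ)
    (hvan : ∀ ι m : ℕ, dfl (ι + m) j
      = ∑ i ∈ Finset.range (j + 1), (j.choose i : ℝ) * dfl ι i * dfl m (j - i))
    (hiota : HasSum (fun ι : ℕ => y ^ ι / ι.factorial *
        ∑ i ∈ Finset.range (j + 1), (j.choose i : ℝ) * dfl ι i * ris (α + ι + 1) (j - i))
      (Real.exp y * σ)) :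
    HasSum (fun κ : ℕ => (1 / 2 : ℝ) ^ κ * lag κ α (-y) * dfl κ j)
      ((2 : ℝ) ^ (α + 1) * Real.exp y * σ) := by
  classical
  set f : ℕ × ℕ → ℝ := fun p =>
    (y ^ p.1 / p.1.factorial * (1 / 2 : ℝ) ^ p.1) *
    (ris (α + p.1 + 1) p.2 / p.2.factorial * (1 / 2 : ℝ) ^ p.2) * dfl (p.1 + p.2) j with hf
  have hfnn : ∀ p, 0 ≤ f p := by
    intro p
    have h1 : (0:ℝ) ≤ ris (α + p.1 + 1) p.2 :=
      ris_nonneg (by have := Nat.cast_nonneg (α := ℝ) p.1; linarith) _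
    have := dfl_nonneg (p.1 + p.2) j
    have hy1 : (0:ℝ) ≤ y ^ p.1 := pow_nonneg hy _
    positivity
  -- fiberwise sums in m
  have hfib : ∀ ι : ℕ, HasSum (fun m => f (ι, m))
      ((2 : ℝ) ^ (α + 1) * (y ^ ι / ι.factorial *
        ∑ i ∈ Finset.range (j + 1), (j.choose i : ℝ) * dfl ι i * ris (α + ι + 1) (j - i))) := by
    intro ι
    have ha : (0:ℝ) < α + ι + 1 := by have := Nat.cast_nonneg (α := ℝ) ι; linarith
    have hterm : ∀ i ∈ Finset.range (j + 1), HasSum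
        (fun m : ℕ => (y ^ ι / ι.factorial * (1 / 2 : ℝ) ^ ι) * ((j.choose i : ℝ) * dfl ι i) *
          (ris (α + ι + 1) m / m.factorial * (1 / 2 : ℝ) ^ m * dfl m (j - i)))
        ((y ^ ι / ι.factorial * (1 / 2 : ℝ) ^ ι) * ((j.choose i : ℝ) * dfl ι i) *
          (ris (α + ι + 1) (j - i) * (2 : ℝ) ^ (α + ι + 1))) := fun i _ =>
      (hasSum_binom_dfl ha (j - i)).mul_left _
    have hsum := hasSum_sum hterm
    have hfun : (fun m : ℕ => ∑ i ∈ Finset.range (j + 1),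
        (y ^ ι / ι.factorial * (1 / 2 : ℝ) ^ ι) * ((j.choose i : ℝ) * dfl ι i) *
          (ris (α + ι + 1) m / m.factorial * (1 / 2 : ℝ) ^ m * dfl m (j - i)))
        = fun m => f (ι, m) := by
      funext m
      rw [hf]
      simp only
      rw [hvan ι m, Finset.mul_sum]
      refine Finset.sum_congr rfl fun i _ => ?_
      ring
    have hval : ∑ i ∈ Finset.range (j + 1),
        (y ^ ι / ι.factorial * (1 / 2 : ℝ) ^ ι) * ((j.choose i : ℝ) * dfl ι i) *
          (ris (α + ι + 1) (j - i) * (2 : ℝ) ^ (α + ι + 1))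
        = (2 : ℝ) ^ (α + 1) * (y ^ ι / ι.factorial *
          ∑ i ∈ Finset.range (j + 1), (j.choose i : ℝ) * dfl ι i * ris (α + ι + 1) (j - i)) := by
      rw [Finset.mul_sum, Finset.mul_sum]
      refine Finset.sum_congr rfl fun i _ => ?_
      have h2 : (2 : ℝ) ^ (α + (ι:ℝ) + 1) = (2:ℝ) ^ (α + 1) * 2 ^ (ι : ℕ) := by
        rw [← Real.rpow_natCast (2:ℝ) ι, ← Real.rpow_add two_pos]
        ring_nf
      rw [h2]
      rw [div_pow, one_pow]
      have : ((2:ℝ) ^ (ι:ℕ)) ≠ 0 := by positivity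
      field_simp
    rw [hfun, hval] at hsum
    exact hsum
  -- summability of f
  have hg : HasSum (fun ι : ℕ => (2 : ℝ) ^ (α + 1) * (y ^ ι / ι.factorial *
      ∑ i ∈ Finset.range (j + 1), (j.choose i : ℝ) * dfl ι i * ris (α + ι + 1) (j - i)))
      ((2 : ℝ) ^ (α + 1) * (Real.exp y * σ)) := hiota.mul_left _
  have hfsumm : Summable f := by
    rw [summable_prod_of_nonneg hfnn]
    refine ⟨fun ι => (hfib ι).summable, ?_⟩
    refine hg.summable.congr fun ι => ?_
    exact ((hfib ι).tsum_eq).symm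
  have hftot : HasSum f ((2 : ℝ) ^ (α + 1) * Real.exp y * σ) := by
    have h1 := hfsumm.hasSum
    have h2 := h1.prod_fiberwise hfib
    have h3 := hg.unique h2
    rw [← mul_assoc] at h3
    rwa [← h3] at h1
  -- regroup along antidiagonals
  have hsig : HasSum (fun κ : ℕ => ∑ p ∈ Finset.HasAntidiagonal.antidiagonal κ, f p)
      ((2 : ℝ) ^ (α + 1) * Real.exp y * σ) := by
    have h1 : HasSum (f ∘ (Finset.HasAntidiagonal.sigmaAntidiagonalEquivProd (A := ℕ)))
        ((2 : ℝ) ^ (α + 1) * Real.exp y * σ) :=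
      (Equiv.hasSum_iff _).mpr hftot
    refine h1.sigma fun κ => ?_
    have h2 : HasSum (fun p : {x // x ∈ Finset.HasAntidiagonal.antidiagonal κ} => f p.1)
        (∑ p ∈ Finset.HasAntidiagonal.antidiagonal κ, f p) := by
      rw [← Finset.sum_finset_coe]
      exact hasSum_fintype _
    exact h2
  -- identify the antidiagonal sums
  refine hsig.congr_fun fun κ => ?_
  rw [Finset.Nat.sum_antidiagonal_eq_sum_range_succ_mk]
  rw [lag, Finset.mul_sum, Finset.sum_mul]
  refine Finset.sum_congr rfl fun ι hι => ?_
  have hικ : ι ≤ κ := Nat.lt_succ_iff.mp (Finset.mem_range.mp hι)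
  rw [hf]
  simp only [ris]
  have e1 : ι + (κ - ι) = κ := Nat.add_sub_cancel' hικ
  rw [e1]
  have e2 : (1 / 2 : ℝ) ^ ι * (1 / 2 : ℝ) ^ (κ - ι) = (1 / 2 : ℝ) ^ κ := by rw [← pow_add, e1]
  have e5 : ((-1 : ℝ)) ^ ι * (-y) ^ ι = y ^ ι := by rw [← mul_pow]; norm_num
  rw [← e2, ← e5]
  ring

lemma hvan0 : ∀ ι m : ℕ, dfl (ι + m) 0
    = ∑ i ∈ Finset.range 1, ((Nat.choose 0 i : ℕ) : ℝ) * dfl ι i * dfl m (0 - i) := by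
  intro ι m
  simp [Finset.sum_range_succ, dfl, Finset.prod_range_succ, Nat.choose]
  all_goals push_cast
  all_goals ring

lemma iota0 (α y : ℝ) :
    HasSum (fun ι : ℕ => y ^ ι / ι.factorial *
        ∑ i ∈ Finset.range 1, ((Nat.choose 0 i : ℕ) : ℝ) * dfl ι i * ris (α + ι + 1) (0 - i))
      (Real.exp y * (1)) := by
  have H := ((hasSum_exp_dfl y 0).mul_left (1 : ℝ))
  have hfun : ∀ ι : ℕ, y ^ ι / ι.factorial *
      ∑ i ∈ Finset.range 1, ((Nat.choose 0 i : ℕ) : ℝ) * dfl ι i * ris (α + ι + 1) (0 - i)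
      = (1 : ℝ) * (y ^ ι / ι.factorial * dfl ι 0) := by
    intro ι
    simp [Finset.sum_range_succ, dfl, ris, Finset.prod_range_succ, Nat.choose]
    all_goals push_cast
    all_goals ring
  have hval : (1 : ℝ) * (y ^ 0 * Real.exp y)
      = Real.exp y * (1) := by ring
  rw [← hval]
  exact H.congr_fun hfun


lemma hvan1 : ∀ ι m : ℕ, dfl (ι + m) 1
    = ∑ i ∈ Finset.range 2, ((Nat.choose 1 i : ℕ) : ℝ) * dfl ι i * dfl m (1 - i) := by
  intro ι m
  simp [Finset.sum_range_succ, dfl, Finset.prod_range_succ, Nat.choose]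
  all_goals push_cast
  all_goals ring

lemma iota1 (α y : ℝ) :
    HasSum (fun ι : ℕ => y ^ ι / ι.factorial *
        ∑ i ∈ Finset.range 2, ((Nat.choose 1 i : ℕ) : ℝ) * dfl ι i * ris (α + ι + 1) (1 - i))
      (Real.exp y * ((1 + α) + 2 * y ^ 1)) := by
  have H := (((hasSum_exp_dfl y 0).mul_left ((1 + α) : ℝ)).add ((hasSum_exp_dfl y 1).mul_left (2 : ℝ)))
  have hfun : ∀ ι : ℕ, y ^ ι / ι.factorial *
      ∑ i ∈ Finset.range 2, ((Nat.choose 1 i : ℕ) : ℝ) * dfl ι i * ris (α + ι + 1) (1 - i)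
      = ((1 + α) : ℝ) * (y ^ ι / ι.factorial * dfl ι 0) + (2 : ℝ) * (y ^ ι / ι.factorial * dfl ι 1) := by
    intro ι
    simp [Finset.sum_range_succ, dfl, ris, Finset.prod_range_succ, Nat.choose]
    all_goals push_cast
    all_goals ring
  have hval : ((1 + α) : ℝ) * (y ^ 0 * Real.exp y) + (2 : ℝ) * (y ^ 1 * Real.exp y)
      = Real.exp y * ((1 + α) + 2 * y ^ 1) := by ring
  rw [← hval]
  exact H.congr_fun hfun


lemma hvan2 : ∀ ι m : ℕ, dfl (ι + m) 2
    = ∑ i ∈ Finset.range 3, ((Nat.choose 2 i : ℕ) : ℝ) * dfl ι i * dfl m (2 - i) := by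
  intro ι m
  simp [Finset.sum_range_succ, dfl, Finset.prod_range_succ, Nat.choose]
  all_goals push_cast
  all_goals ring

lemma iota2 (α y : ℝ) :
    HasSum (fun ι : ℕ => y ^ ι / ι.factorial *
        ∑ i ∈ Finset.range 3, ((Nat.choose 2 i : ℕ) : ℝ) * dfl ι i * ris (α + ι + 1) (2 - i))
      (Real.exp y * ((2 + 3*α + α^2) + (8 + 4*α) * y ^ 1 + 4 * y ^ 2)) := by
  have H := ((((hasSum_exp_dfl y 0).mul_left ((2 + 3*α + α^2) : ℝ)).add ((hasSum_exp_dfl y 1).mul_left ((8 + 4*α) : ℝ))).add ((hasSum_exp_dfl y 2).mul_left (4 : ℝ)))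
  have hfun : ∀ ι : ℕ, y ^ ι / ι.factorial *
      ∑ i ∈ Finset.range 3, ((Nat.choose 2 i : ℕ) : ℝ) * dfl ι i * ris (α + ι + 1) (2 - i)
      = ((2 + 3*α + α^2) : ℝ) * (y ^ ι / ι.factorial * dfl ι 0) + ((8 + 4*α) : ℝ) * (y ^ ι / ι.factorial * dfl ι 1) + (4 : ℝ) * (y ^ ι / ι.factorial * dfl ι 2) := by
    intro ι
    simp [Finset.sum_range_succ, dfl, ris, Finset.prod_range_succ, Nat.choose]
    all_goals push_cast
    all_goals ring
  have hval : ((2 + 3*α + α^2) : ℝ) * (y ^ 0 * Real.exp y) + ((8 + 4*α) : ℝ) * (y ^ 1 * Real.exp y) + (4 : ℝ) * (y ^ 2 * Real.exp y)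
      = Real.exp y * ((2 + 3*α + α^2) + (8 + 4*α) * y ^ 1 + 4 * y ^ 2) := by ring
  rw [← hval]
  exact H.congr_fun hfun


lemma hvan3 : ∀ ι m : ℕ, dfl (ι + m) 3
    = ∑ i ∈ Finset.range 4, ((Nat.choose 3 i : ℕ) : ℝ) * dfl ι i * dfl m (3 - i) := by
  intro ι m
  simp [Finset.sum_range_succ, dfl, Finset.prod_range_succ, Nat.choose]
  all_goals push_cast
  all_goals ring

lemma iota3 (α y : ℝ) :
    HasSum (fun ι : ℕ => y ^ ι / ι.factorial *
        ∑ i ∈ Finset.range 4, ((Nat.choose 3 i : ℕ) : ℝ) * dfl ι i * ris (α + ι + 1) (3 - i))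
      (Real.exp y * ((6 + 11*α + 6*α^2 + α^3) + (36 + 30*α + 6*α^2) * y ^ 1 + (36 + 12*α) * y ^ 2 + 8 * y ^ 3)) := by
  have H := (((((hasSum_exp_dfl y 0).mul_left ((6 + 11*α + 6*α^2 + α^3) : ℝ)).add ((hasSum_exp_dfl y 1).mul_left ((36 + 30*α + 6*α^2) : ℝ))).add ((hasSum_exp_dfl y 2).mul_left ((36 + 12*α) : ℝ))).add ((hasSum_exp_dfl y 3).mul_left (8 : ℝ)))
  have hfun : ∀ ι : ℕ, y ^ ι / ι.factorial *
      ∑ i ∈ Finset.range 4, ((Nat.choose 3 i : ℕ) : ℝ) * dfl ι i * ris (α + ι + 1) (3 - i)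
      = ((6 + 11*α + 6*α^2 + α^3) : ℝ) * (y ^ ι / ι.factorial * dfl ι 0) + ((36 + 30*α + 6*α^2) : ℝ) * (y ^ ι / ι.factorial * dfl ι 1) + ((36 + 12*α) : ℝ) * (y ^ ι / ι.factorial * dfl ι 2) + (8 : ℝ) * (y ^ ι / ι.factorial * dfl ι 3) := by
    intro ι
    simp [Finset.sum_range_succ, dfl, ris, Finset.prod_range_succ, Nat.choose]
    all_goals push_cast
    all_goals ring
  have hval : ((6 + 11*α + 6*α^2 + α^3) : ℝ) * (y ^ 0 * Real.exp y) + ((36 + 30*α + 6*α^2) : ℝ) * (y ^ 1 * Real.exp y) + ((36 + 12*α) : ℝ) * (y ^ 2 * Real.exp y) + (8 : ℝ) * (y ^ 3 * Real.exp y)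
      = Real.exp y * ((6 + 11*α + 6*α^2 + α^3) + (36 + 30*α + 6*α^2) * y ^ 1 + (36 + 12*α) * y ^ 2 + 8 * y ^ 3) := by ring
  rw [← hval]
  exact H.congr_fun hfun


lemma hvan4 : ∀ ι m : ℕ, dfl (ι + m) 4
    = ∑ i ∈ Finset.range 5, ((Nat.choose 4 i : ℕ) : ℝ) * dfl ι i * dfl m (4 - i) := by
  intro ι m
  simp [Finset.sum_range_succ, dfl, Finset.prod_range_succ, Nat.choose]
  all_goals push_cast
  all_goals ring

lemma iota4 (α y : ℝ) :
    HasSum (fun ι : ℕ => y ^ ι / ι.factorial *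
        ∑ i ∈ Finset.range 5, ((Nat.choose 4 i : ℕ) : ℝ) * dfl ι i * ris (α + ι + 1) (4 - i))
      (Real.exp y * ((24 + 50*α + 35*α^2 + 10*α^3 + α^4) + (192 + 208*α + 72*α^2 + 8*α^3) * y ^ 1 + (288 + 168*α + 24*α^2) * y ^ 2 + (128 + 32*α) * y ^ 3 + 16 * y ^ 4)) := by
  have H := ((((((hasSum_exp_dfl y 0).mul_left ((24 + 50*α + 35*α^2 + 10*α^3 + α^4) : ℝ)).add ((hasSum_exp_dfl y 1).mul_left ((192 + 208*α + 72*α^2 + 8*α^3) : ℝ))).add ((hasSum_exp_dfl y 2).mul_left ((288 + 168*α + 24*α^2) : ℝ))).add ((hasSum_exp_dfl y 3).mul_left ((128 + 32*α) : ℝ))).add ((hasSum_exp_dfl y 4).mul_left (16 : ℝ)))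
  have hfun : ∀ ι : ℕ, y ^ ι / ι.factorial *
      ∑ i ∈ Finset.range 5, ((Nat.choose 4 i : ℕ) : ℝ) * dfl ι i * ris (α + ι + 1) (4 - i)
      = ((24 + 50*α + 35*α^2 + 10*α^3 + α^4) : ℝ) * (y ^ ι / ι.factorial * dfl ι 0) + ((192 + 208*α + 72*α^2 + 8*α^3) : ℝ) * (y ^ ι / ι.factorial * dfl ι 1) + ((288 + 168*α + 24*α^2) : ℝ) * (y ^ ι / ι.factorial * dfl ι 2) + ((128 + 32*α) : ℝ) * (y ^ ι / ι.factorial * dfl ι 3) + (16 : ℝ) * (y ^ ι / ι.factorial * dfl ι 4) := by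
    intro ι
    simp [Finset.sum_range_succ, dfl, ris, Finset.prod_range_succ, Nat.choose]
    all_goals push_cast
    all_goals ring
  have hval : ((24 + 50*α + 35*α^2 + 10*α^3 + α^4) : ℝ) * (y ^ 0 * Real.exp y) + ((192 + 208*α + 72*α^2 + 8*α^3) : ℝ) * (y ^ 1 * Real.exp y) + ((288 + 168*α + 24*α^2) : ℝ) * (y ^ 2 * Real.exp y) + ((128 + 32*α) : ℝ) * (y ^ 3 * Real.exp y) + (16 : ℝ) * (y ^ 4 * Real.exp y)
      = Real.exp y * ((24 + 50*α + 35*α^2 + 10*α^3 + α^4) + (192 + 208*α + 72*α^2 + 8*α^3) * y ^ 1 + (288 + 168*α + 24*α^2) * y ^ 2 + (128 + 32*α) * y ^ 3 + 16 * y ^ 4) := by ring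
  rw [← hval]
  exact H.congr_fun hfun
lemma kappa_pos {β : ℝ} (hβ : 0 < β) {κ : ℕ} (hκ : κ ≠ 0) : (0:ℝ) < (κ:ℝ) * β := by
  have : (1:ℝ) ≤ (κ:ℝ) := by exact_mod_cast Nat.one_le_iff_ne_zero.mpr hκ
  nlinarith

lemma ker_eq {η β : ℝ} (hη : 0 < η) (hβ : 0 < β) {κ : ℕ} (hκ : κ ≠ 0) (m : ℕ)
    {z : ℝ} (hz : z ∈ Ioi (0:ℝ)) :
    ker η β κ z * z ^ m = ((η*β) ^ ((κ:ℝ)*β) / Real.Gamma ((κ:ℝ)*β)) *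
      (Real.exp (-((η*β) * z)) * z ^ (((κ:ℝ)*β + m) - 1)) := by
  have hz' : (0:ℝ) < z := hz
  have hc : (0:ℝ) < η*β := by positivity
  set c := η*β with hcdef
  set s := (κ:ℝ)*β with hsdef
  have h1 : (c*z) ^ (s-1) = c ^ (s-1) * z ^ (s-1) := Real.mul_rpow hc.le hz'.le
  have h2 : c * c ^ (s-1) = c ^ s := by
    nth_rewrite 1 [← Real.rpow_one c]
    rw [← Real.rpow_add hc]
    ring_nf
  have h3 : z ^ (s-1) * (z:ℝ) ^ m = z ^ ((s + m) - 1) := by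
    rw [← Real.rpow_natCast z m, ← Real.rpow_add hz']
    congr 1
    ring
  simp only [_root_.ker]
  rw [← hcdef, ← hsdef, h1]
  rw [div_mul_eq_mul_div, ← h3, ← h2]
  ring

lemma ker_integrable {η β : ℝ} (hη : 0 < η) (hβ : 0 < β) {κ : ℕ} (hκ : κ ≠ 0) (m : ℕ) :
    IntegrableOn (fun z => ker η β κ z * z ^ m) (Ioi (0:ℝ)) := by
  have hc : (0:ℝ) < η*β := by positivity
  have hs := kappa_pos hβ hκ
  have h : IntegrableOn (fun z : ℝ => ((η*β) ^ ((κ:ℝ)*β) / Real.Gamma ((κ:ℝ)*β)) *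
      (Real.exp (-((η*β) * z)) * z ^ (((κ:ℝ)*β + m) - 1))) (Ioi (0:ℝ)) :=
    (integrableOn_exp_rpow (by positivity) hc).const_mul _
  exact h.congr_fun (fun z hz => (ker_eq hη hβ hκ m hz).symm) measurableSet_Ioi

lemma ker_moment {η β : ℝ} (hη : 0 < η) (hβ : 0 < β) {κ : ℕ} (hκ : κ ≠ 0) (m : ℕ) :
    ∫ z in Ioi (0:ℝ), ker η β κ z * z ^ m
      = ris ((κ:ℝ)*β) m * ((η*β)⁻¹) ^ m := by
  have hc : (0:ℝ) < η*β := by positivity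
  have hs := kappa_pos hβ hκ
  have hG := Real.Gamma_pos_of_pos hs
  rw [setIntegral_congr_fun measurableSet_Ioi (fun z hz => ker_eq hη hβ hκ m hz),
    integral_const_mul, integral_exp_rpow (by positivity) hc, Gamma_shift hs m]
  have h4 : (η*β) ^ ((κ:ℝ)*β + m) = (η*β) ^ ((κ:ℝ)*β) * (η*β) ^ (m:ℕ) := by
    rw [Real.rpow_add hc, Real.rpow_natCast]
  rw [h4]
  have h5 : (η*β) ^ ((κ:ℝ)*β) ≠ 0 := (Real.rpow_pos_of_pos hc _).ne'
  have h6 : ((η*β):ℝ) ≠ 0 := hc.ne'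
  field_simp
  have e : β ^ m * η ^ m * β⁻¹ ^ m * η⁻¹ ^ m = 1 := by
    rw [← mul_pow, ← mul_pow, ← mul_pow, show β * η * β⁻¹ * η⁻¹ = 1 by field_simp, one_pow]
  linear_combination (-(ris (β * (κ:ℝ)) m)) * e

lemma ker_cm {η β x : ℝ} (hη : 0 < η) (hβ : 0 < β) {κ : ℕ} (hκ : κ ≠ 0) :
    ∫ z in Ioi (0:ℝ), ker η β κ z * (z - x) ^ 4
      = ris ((κ:ℝ)*β) 4 * ((η*β)⁻¹) ^ 4
        + (-4*x) * (ris ((κ:ℝ)*β) 3 * ((η*β)⁻¹) ^ 3)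
        + (6*x^2) * (ris ((κ:ℝ)*β) 2 * ((η*β)⁻¹) ^ 2)
        + (-4*x^3) * (ris ((κ:ℝ)*β) 1 * ((η*β)⁻¹) ^ 1)
        + (x^4) * (ris ((κ:ℝ)*β) 0 * ((η*β)⁻¹) ^ 0) := by
  have h4 := ker_integrable hη hβ hκ 4
  have h3 := ker_integrable hη hβ hκ 3
  have h2 := ker_integrable hη hβ hκ 2
  have h1 := ker_integrable hη hβ hκ 1
  have h0 := ker_integrable hη hβ hκ 0
  have hsplit : ∀ z ∈ Ioi (0:ℝ), ker η β κ z * (z - x) ^ 4 =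
      ker η β κ z * z ^ 4 + (-4*x) * (ker η β κ z * z ^ 3) + (6*x^2) * (ker η β κ z * z ^ 2)
      + (-4*x^3) * (ker η β κ z * z ^ 1) + (x^4) * (ker η β κ z * z ^ 0) := fun z _ => by ring
  rw [setIntegral_congr_fun measurableSet_Ioi hsplit]
  have i3 : IntegrableOn (fun z => (-4*x) * (_root_.ker η β κ z * z ^ 3)) (Ioi (0:ℝ)) :=
    h3.const_mul _
  have i2 : IntegrableOn (fun z => (6*x^2) * (_root_.ker η β κ z * z ^ 2)) (Ioi (0:ℝ)) :=
    h2.const_mul _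
  have i1 : IntegrableOn (fun z => (-4*x^3) * (_root_.ker η β κ z * z ^ 1)) (Ioi (0:ℝ)) :=
    h1.const_mul _
  have i0 : IntegrableOn (fun z => (x^4) * (_root_.ker η β κ z * z ^ 0)) (Ioi (0:ℝ)) :=
    h0.const_mul _
  have i43 : IntegrableOn (fun z => _root_.ker η β κ z * z ^ 4
      + (-4*x) * (_root_.ker η β κ z * z ^ 3)) (Ioi (0:ℝ)) := h4.add i3
  have i432 : IntegrableOn (fun z => _root_.ker η β κ z * z ^ 4
      + (-4*x) * (_root_.ker η β κ z * z ^ 3) + (6*x^2) * (_root_.ker η β κ z * z ^ 2))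
      (Ioi (0:ℝ)) := i43.add i2
  have i4321 : IntegrableOn (fun z => _root_.ker η β κ z * z ^ 4
      + (-4*x) * (_root_.ker η β κ z * z ^ 3) + (6*x^2) * (_root_.ker η β κ z * z ^ 2)
      + (-4*x^3) * (_root_.ker η β κ z * z ^ 1)) (Ioi (0:ℝ)) := i432.add i1
  rw [integral_add i4321 i0, integral_add i432 i1, integral_add i43 i2, integral_add h4 i3,
    integral_const_mul, integral_const_mul, integral_const_mul, integral_const_mul,
    ker_moment hη hβ hκ 4, ker_moment hη hβ hκ 3, ker_moment hη hβ hκ 2,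
    ker_moment hη hβ hκ 1, ker_moment hη hβ hκ 0]
lemma masterQ {α y : ℝ} (hα : -1 < α) (hy : 0 ≤ y) (a0 a1 a2 a3 a4 : ℝ) :
    HasSum (fun κ : ℕ => (1 / 2 : ℝ) ^ κ * lag κ α (-y) *
        (a0 * dfl κ 0 + a1 * dfl κ 1 + a2 * dfl κ 2 + a3 * dfl κ 3 + a4 * dfl κ 4))
      ((2 : ℝ) ^ (α + 1) * Real.exp y *
        (a0 * 1
          + a1 * ((1 + α) + 2 * y ^ 1)
          + a2 * ((2 + 3*α + α^2) + (8 + 4*α) * y ^ 1 + 4 * y ^ 2)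
          + a3 * ((6 + 11*α + 6*α^2 + α^3) + (36 + 30*α + 6*α^2) * y ^ 1
              + (36 + 12*α) * y ^ 2 + 8 * y ^ 3)
          + a4 * ((24 + 50*α + 35*α^2 + 10*α^3 + α^4) + (192 + 208*α + 72*α^2 + 8*α^3) * y ^ 1
              + (288 + 168*α + 24*α^2) * y ^ 2 + (128 + 32*α) * y ^ 3 + 16 * y ^ 4))) := by
  have M0 := core hα hy 0 _ hvan0 (iota0 α y)
  have M1 := core hα hy 1 _ hvan1 (iota1 α y)
  have M2 := core hα hy 2 _ hvan2 (iota2 α y)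
  have M3 := core hα hy 3 _ hvan3 (iota3 α y)
  have M4 := core hα hy 4 _ hvan4 (iota4 α y)
  have H := ((((M0.mul_left a0).add (M1.mul_left a1)).add (M2.mul_left a2)).add
    (M3.mul_left a3)).add (M4.mul_left a4)
  have hval : a0 * ((2 : ℝ) ^ (α + 1) * Real.exp y * 1)
      + a1 * ((2 : ℝ) ^ (α + 1) * Real.exp y * ((1 + α) + 2 * y ^ 1))
      + a2 * ((2 : ℝ) ^ (α + 1) * Real.exp y * ((2 + 3*α + α^2) + (8 + 4*α) * y ^ 1 + 4 * y ^ 2))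
      + a3 * ((2 : ℝ) ^ (α + 1) * Real.exp y * ((6 + 11*α + 6*α^2 + α^3)
          + (36 + 30*α + 6*α^2) * y ^ 1 + (36 + 12*α) * y ^ 2 + 8 * y ^ 3))
      + a4 * ((2 : ℝ) ^ (α + 1) * Real.exp y * ((24 + 50*α + 35*α^2 + 10*α^3 + α^4)
          + (192 + 208*α + 72*α^2 + 8*α^3) * y ^ 1 + (288 + 168*α + 24*α^2) * y ^ 2
          + (128 + 32*α) * y ^ 3 + 16 * y ^ 4))
      = (2 : ℝ) ^ (α + 1) * Real.exp y *
        (a0 * 1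
          + a1 * ((1 + α) + 2 * y ^ 1)
          + a2 * ((2 + 3*α + α^2) + (8 + 4*α) * y ^ 1 + 4 * y ^ 2)
          + a3 * ((6 + 11*α + 6*α^2 + α^3) + (36 + 30*α + 6*α^2) * y ^ 1
              + (36 + 12*α) * y ^ 2 + 8 * y ^ 3)
          + a4 * ((24 + 50*α + 35*α^2 + 10*α^3 + α^4) + (192 + 208*α + 72*α^2 + 8*α^3) * y ^ 1
              + (288 + 168*α + 24*α^2) * y ^ 2 + (128 + 32*α) * y ^ 3 + 16 * y ^ 4)) := by
    ring
  rw [← hval]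
  refine H.congr_fun fun κ => ?_
  ring

end Stmt17

set_option maxHeartbeats 4000000 in
open Stmt17 in
/-- Asymptotics of the fourth central moment `μ_{η,4}(x)`. -/
theorem stmt17 (α β : ℝ) (hα : -1 < α) (hβ : 0 < β) (x : ℝ) (hx : 0 ≤ x) :
    Filter.Tendsto (fun η : ℝ => η ^ 2 * Rop η β α (fun t => (t - x) ^ 4) x)
      Filter.atTop (nhds (3 * x ^ 2 * (3 * β + 1) ^ 2 / β ^ 2)) := by
  have hβ' : β ≠ 0 := hβ.ne'
  set C0 := 3 * x ^ 2 * (3 * β + 1) ^ 2 / β ^ 2 with hC0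
  set C1 := x * (6/β^3 + 47/β^2 + 150/β + 181 + α*(14/β^2 + 78/β + 124) + α^2*(6/β + 18))
    with hC1
  set C2 := (6/β^3 + 33/β^2 + 78/β + 75) + α*(6/β^3 + 44/β^2 + 126/β + 138)
      + α^2*(11/β^2 + 54/β + 78) + α^3*(6/β + 16) + α^4 with hC2
  have hlim : Tendsto (fun η : ℝ => C0 + C1 * η⁻¹ + C2 * (η⁻¹ * η⁻¹)) atTop (nhds C0) := by
    have h1 : Tendsto (fun η : ℝ => η⁻¹) atTop (nhds (0:ℝ)) := tendsto_inv_atTop_zero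
    have h2 := ((tendsto_const_nhds (x := C0) (f := atTop)).add
      (h1.const_mul C1)).add ((h1.mul h1).const_mul C2)
    simpa using h2
  refine Tendsto.congr' ?_ hlim
  filter_upwards [Ioi_mem_atTop (0:ℝ)] with η hη
  have hη' : (0:ℝ) < η := hη
  have hη0 : η ≠ 0 := hη'.ne'
  have hy : (0:ℝ) ≤ η * x / 2 := by positivity
  -- abbreviations for the coefficients
  have hmq := masterQ hα hy (x^4)
    (6*β*((η*β)⁻¹)^4 - 8*β*x*((η*β)⁻¹)^3 + 6*β*x^2*((η*β)⁻¹)^2 - 4*β*x^3*((η*β)⁻¹)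
      + 11*β^2*((η*β)⁻¹)^4 - 12*β^2*x*((η*β)⁻¹)^3 + 6*β^2*x^2*((η*β)⁻¹)^2
      + 6*β^3*((η*β)⁻¹)^4 - 4*β^3*x*((η*β)⁻¹)^3 + β^4*((η*β)⁻¹)^4)
    (11*β^2*((η*β)⁻¹)^4 - 12*β^2*x*((η*β)⁻¹)^3 + 6*β^2*x^2*((η*β)⁻¹)^2
      + 18*β^3*((η*β)⁻¹)^4 - 12*β^3*x*((η*β)⁻¹)^3 + 7*β^4*((η*β)⁻¹)^4)
    (6*β^3*((η*β)⁻¹)^4 - 4*β^3*x*((η*β)⁻¹)^3 + 6*β^4*((η*β)⁻¹)^4)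
    (β^4*((η*β)⁻¹)^4)
  have hfn : ∀ κ : ℕ, (2 : ℝ) ^ (-(κ : ℝ)) * lag κ α (-(η * x) / 2) *
      (if κ = 0 then ((0:ℝ) - x) ^ 4
        else ∫ z in Ioi (0 : ℝ), _root_.ker η β κ z * (z - x) ^ 4)
      = (1 / 2 : ℝ) ^ κ * lag κ α (-(η * x / 2)) *
        ((x^4) * dfl κ 0
          + (6*β*((η*β)⁻¹)^4 - 8*β*x*((η*β)⁻¹)^3 + 6*β*x^2*((η*β)⁻¹)^2 - 4*β*x^3*((η*β)⁻¹)
              + 11*β^2*((η*β)⁻¹)^4 - 12*β^2*x*((η*β)⁻¹)^3 + 6*β^2*x^2*((η*β)⁻¹)^2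
              + 6*β^3*((η*β)⁻¹)^4 - 4*β^3*x*((η*β)⁻¹)^3 + β^4*((η*β)⁻¹)^4) * dfl κ 1
          + (11*β^2*((η*β)⁻¹)^4 - 12*β^2*x*((η*β)⁻¹)^3 + 6*β^2*x^2*((η*β)⁻¹)^2
              + 18*β^3*((η*β)⁻¹)^4 - 12*β^3*x*((η*β)⁻¹)^3 + 7*β^4*((η*β)⁻¹)^4) * dfl κ 2
          + (6*β^3*((η*β)⁻¹)^4 - 4*β^3*x*((η*β)⁻¹)^3 + 6*β^4*((η*β)⁻¹)^4) * dfl κ 3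
          + (β^4*((η*β)⁻¹)^4) * dfl κ 4) := by
    intro κ
    have hpow : (2 : ℝ) ^ (-(κ : ℝ)) = (1 / 2 : ℝ) ^ κ := by
      rw [Real.rpow_neg (by norm_num : (0:ℝ) ≤ 2), Real.rpow_natCast, one_div, inv_pow]
    have harg : (-(η * x) / 2 : ℝ) = -(η * x / 2) := by ring
    rw [hpow, harg]
    by_cases hκ : κ = 0
    · subst hκ
      rw [if_pos rfl]
      have hd0 : dfl 0 0 = 1 := by simp [dfl]
      have hd1 : dfl 0 1 = 0 := dfl_zero (by norm_num)
      have hd2 : dfl 0 2 = 0 := dfl_zero (by norm_num)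
      have hd3 : dfl 0 3 = 0 := dfl_zero (by norm_num)
      have hd4 : dfl 0 4 = 0 := dfl_zero (by norm_num)
      rw [hd0, hd1, hd2, hd3, hd4]
      ring
    · rw [if_neg hκ, ker_cm hη' hβ hκ]
      congr 1
      simp [ris, dfl, Finset.prod_range_succ]
      push_cast
      ring
  have htsum : (∑' κ : ℕ, (2 : ℝ) ^ (-(κ : ℝ)) * lag κ α (-(η * x) / 2) *
      (if κ = 0 then ((0:ℝ) - x) ^ 4
        else ∫ z in Ioi (0 : ℝ), _root_.ker η β κ z * (z - x) ^ 4)) = _ :=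
    (tsum_congr hfn).trans hmq.tsum_eq
  show C0 + C1 * η⁻¹ + C2 * (η⁻¹ * η⁻¹) = η ^ 2 * Rop η β α (fun t => (t - x) ^ 4) x
  simp only [Rop]
  rw [htsum]
  have e6 : (2:ℝ) ^ (-α-1) * (2:ℝ) ^ (α+1) = 1 := by
    rw [← Real.rpow_add two_pos]; norm_num
  have e7 : Real.exp (-(η*x)/2) * Real.exp (η*x/2) = 1 := by
    rw [← Real.exp_add, show (-(η*x)/2 + η*x/2 : ℝ) = 0 by ring, Real.exp_zero]
  have e8 : ∀ S : ℝ, Real.exp (-(η*x)/2) * (2:ℝ)^(-α-1) * ((2:ℝ)^(α+1) * Real.exp (η*x/2) * S)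
      = S := by
    intro S
    calc Real.exp (-(η*x)/2) * (2:ℝ)^(-α-1) * ((2:ℝ)^(α+1) * Real.exp (η*x/2) * S)
        = (Real.exp (-(η*x)/2) * Real.exp (η*x/2)) * ((2:ℝ)^(-α-1) * (2:ℝ)^(α+1)) * S := by
          ring
      _ = S := by rw [e6, e7]; ring
  rw [e8]
  rw [hC0, hC1, hC2]
  field_simp
  ring
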